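/- Fix real parameters σ > 0, γ > 0, g > 0 and η ≠ 0; set ω = σγη and β = 2σ²/g, and define u(t) = cosh(ωt) + (ω/β)sinh(ωt), v(t) = cosh(ωt) + (β/ω)sinh(ωt), a(t) = g·v(t)/u(t), P(t) = p₀/u(t), Q(t) = (Q₀ − ηβ(u(t) − 1)/ω²)/v(t) for given p₀, Q₀ ∈ ℝ. Then the function D(t) = (1/(2γ²))·(t·v(t) − sinh(ωt)/ω − 2β(cosh(ωt) − 1)/ω²)/v(t) − σ²ηQ₀·(cosh(ωt) − 1)/(ω²·v(t)) + (σ²Q₀²/2)·sinh(ωt)/(ω·v(t)) + (γ²η²p₀²/2)·sinh(ωt)/(ω·u(t)) satisfies D(0) = 0 and, for every t ≥ 0, D'(t) = (σ²/2)·Q(t)² + (γ²η²/2)·P(t)². -/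

import Mathlib

set_option maxHeartbeats 4000000

/-- The explicit damping exponent
`D(t) = (1/(2γ²))(t·v − sinh(ωt)/ω − 2β(cosh(ωt)−1)/ω²)/v
        − σ²ηQ₀(cosh(ωt)−1)/(ω²v) + (σ²Q₀²/2)sinh(ωt)/(ωv)
        + (γ²η²p₀²/2)sinh(ωt)/(ωu)`
satisfies `D(0) = 0` and `D'(t) = (σ²/2)Q(t)² + (γ²η²/2)P(t)²` for `t ≥ 0`. -/
theorem stmt2 (σ γ g η : ℝ) (hσ : 0 < σ) (hγ : 0 < γ) (hg : 0 < g) (hη : η ≠ 0)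
    (p₀ Q₀ : ℝ) (ω β : ℝ) (hω : ω = σ * γ * η) (hβ : β = 2 * σ ^ 2 / g)
    (u v a P Q D : ℝ → ℝ)
    (hu : ∀ t, u t = Real.cosh (ω * t) + (ω / β) * Real.sinh (ω * t))
    (hv : ∀ t, v t = Real.cosh (ω * t) + (β / ω) * Real.sinh (ω * t))
    (ha : ∀ t, a t = g * v t / u t)
    (hP : ∀ t, P t = p₀ / u t)
    (hQ : ∀ t, Q t = (Q₀ - η * β * (u t - 1) / ω ^ 2) / v t)
    (hD : ∀ t, D t =
      (1 / (2 * γ ^ 2)) *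
          ((t * v t - Real.sinh (ω * t) / ω - 2 * β * (Real.cosh (ω * t) - 1) / ω ^ 2) / v t)
        - σ ^ 2 * η * Q₀ * (Real.cosh (ω * t) - 1) / (ω ^ 2 * v t)
        + (σ ^ 2 * Q₀ ^ 2 / 2) * Real.sinh (ω * t) / (ω * v t)
        + (γ ^ 2 * η ^ 2 * p₀ ^ 2 / 2) * Real.sinh (ω * t) / (ω * u t)) :
    D 0 = 0 ∧
    ∀ t ≥ 0, HasDerivAt D (σ ^ 2 / 2 * (Q t) ^ 2 + γ ^ 2 * η ^ 2 / 2 * (P t) ^ 2) t := by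
  have hσ' : σ ≠ 0 := hσ.ne'
  have hγ' : γ ≠ 0 := hγ.ne'
  have hg' : g ≠ 0 := hg.ne'
  have hω0 : ω ≠ 0 := by rw [hω]; exact mul_ne_zero (mul_ne_zero hσ' hγ') hη
  have hβpos : 0 < β := by rw [hβ]; positivity
  have hβ0 : β ≠ 0 := hβpos.ne'
  constructor
  · rw [hD 0]
    simp
  · intro t ht
    set c := Real.cosh (ω * t) with hcdef
    set s := Real.sinh (ω * t) with hsdef
    have key : 0 ≤ ω * s := by
      rcases lt_or_gt_of_ne hω0 with h | h
      · have h1 : ω * t ≤ 0 := mul_nonpos_of_nonpos_of_nonneg h.le ht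
        have h2 : s ≤ 0 := Real.sinh_nonpos_iff.2 h1
        nlinarith
      · have h1 : 0 ≤ ω * t := mul_nonneg h.le ht
        exact mul_nonneg h.le (Real.sinh_nonneg_iff.2 h1)
    have hcosh1 : 1 ≤ c := Real.one_le_cosh (ω * t)
    have hut : 1 ≤ u t := by
      rw [hu t, ← hcdef, ← hsdef]
      have : 0 ≤ ω / β * s := by
        rw [div_mul_eq_mul_div]; exact div_nonneg key hβpos.le
      linarith
    have hvt : 1 ≤ v t := by
      rw [hv t, ← hcdef, ← hsdef]
      have : β / ω * s = β * (ω * s) / ω ^ 2 := by field_simp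
      have h3 : 0 ≤ β / ω * s := by rw [this]; positivity
      linarith
    have hu0 : u t ≠ 0 := by linarith
    have hv0 : v t ≠ 0 := by linarith
    -- derivatives of cosh, sinh compositions
    have hlin : HasDerivAt (fun x : ℝ => ω * x) ω t := by
      simpa using (hasDerivAt_id t).const_mul ω
    have hc : HasDerivAt (fun x : ℝ => Real.cosh (ω * x)) (s * ω) t :=
      (Real.hasDerivAt_cosh (ω * t)).comp t hlin
    have hs : HasDerivAt (fun x : ℝ => Real.sinh (ω * x)) (c * ω) t :=
      (Real.hasDerivAt_sinh (ω * t)).comp t hlin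
    have hueq : u = fun x => Real.cosh (ω * x) + (ω / β) * Real.sinh (ω * x) := funext hu
    have hveq : v = fun x => Real.cosh (ω * x) + (β / ω) * Real.sinh (ω * x) := funext hv
    have hu' : HasDerivAt u (s * ω + (ω / β) * (c * ω)) t := by
      rw [hueq]; exact hc.add (hs.const_mul _)
    have hv' : HasDerivAt v (s * ω + (β / ω) * (c * ω)) t := by
      rw [hveq]; exact hc.add (hs.const_mul _)
    have hDeq : D = fun x =>
      (1 / (2 * γ ^ 2)) *
          ((x * v x - Real.sinh (ω * x) / ω - 2 * β * (Real.cosh (ω * x) - 1) / ω ^ 2) / v x)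
        - σ ^ 2 * η * Q₀ * (Real.cosh (ω * x) - 1) / (ω ^ 2 * v x)
        + (σ ^ 2 * Q₀ ^ 2 / 2) * Real.sinh (ω * x) / (ω * v x)
        + (γ ^ 2 * η ^ 2 * p₀ ^ 2 / 2) * Real.sinh (ω * x) / (ω * u x) := funext hD
    rw [hDeq]
    have hN : HasDerivAt
        (fun x => x * v x - Real.sinh (ω * x) / ω - 2 * β * (Real.cosh (ω * x) - 1) / ω ^ 2)
        (1 * v t + t * (s * ω + (β / ω) * (c * ω)) - (c * ω) / ω - 2 * β * (s * ω) / ω ^ 2)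
        t :=
      (((hasDerivAt_id t).mul hv').sub (hs.div_const ω)).sub
        (((hc.sub_const 1).const_mul (2 * β)).div_const (ω ^ 2))
    have h1 := (hN.div hv' hv0).const_mul (1 / (2 * γ ^ 2))
    have h2 := ((hc.sub_const 1).const_mul (σ ^ 2 * η * Q₀)).div (hv'.const_mul (ω ^ 2))
      (mul_ne_zero (pow_ne_zero 2 hω0) hv0)
    have h3 := (hs.const_mul (σ ^ 2 * Q₀ ^ 2 / 2)).div (hv'.const_mul ω) (mul_ne_zero hω0 hv0)
    have h4 := (hs.const_mul (γ ^ 2 * η ^ 2 * p₀ ^ 2 / 2)).div (hu'.const_mul ω)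
      (mul_ne_zero hω0 hu0)
    have main := ((h1.sub h2).add h3).add h4
    refine main.congr_deriv ?_
    symm
    rw [hQ t, hP t]
    set E := Real.exp (ω * t) with hEdef
    have hEpos : 0 < E := Real.exp_pos _
    have hE0 : E ≠ 0 := hEpos.ne'
    have hcE2 : c = (E ^ 2 + 1) / (2 * E) := by
      rw [hcdef, Real.cosh_eq, Real.exp_neg, ← hEdef]
      field_simp
    have hsE2 : s = (E ^ 2 - 1) / (2 * E) := by
      rw [hsdef, Real.sinh_eq, Real.exp_neg, ← hEdef]
      field_simp
    have huE : u t = (2 * σ * (E ^ 2 + 1) + γ * η * g * (E ^ 2 - 1)) / (4 * σ * E) := by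
      rw [hu t, ← hcdef, ← hsdef, hcE2, hsE2, hω, hβ]
      field_simp
      ring
    have hvE : v t = (g * γ * η * (E ^ 2 + 1) + 2 * σ * (E ^ 2 - 1)) / (2 * g * γ * η * E) := by
      rw [hv t, ← hcdef, ← hsdef, hcE2, hsE2, hω, hβ]
      field_simp
    have hA0 : 2 * σ * (E ^ 2 + 1) + γ * η * g * (E ^ 2 - 1) ≠ 0 := by
      have h := hu0
      rw [huE] at h
      intro hcon
      rw [hcon] at h
      simp at h
    have hB0 : g * γ * η * (E ^ 2 + 1) + 2 * σ * (E ^ 2 - 1) ≠ 0 := by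
      have h := hv0
      rw [hvE] at h
      intro hcon
      rw [hcon] at h
      simp at h
    rw [← hcdef, ← hsdef, huE, hvE, hcE2, hsE2, hω, hβ]
    field_simp
    ring
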